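/- For every even integer n ≥ 2, the bipartite adjacency matrix of the n-dimensional hypercube Q_n over the field ZMod 2 — that is, the matrix with rows indexed by the even-weight vertices of Q_n, columns indexed by the odd-weight vertices of Q_n, and entry 1 when the two vertices are adjacent and 0 otherwise — has rank exactly 2^(n-2) over ZMod 2. -/

import Mathlib

/-- The `n`-dimensional hypercube graph: vertices are elements of `{0,1}^n`,
adjacent iff they differ in exactly one coordinate. -/
def hypercube (n : ℕ) : SimpleGraph (Fin n → ZMod 2) where
  Adj x y := ∃! i, x i ≠ y i
  symm := by constructor; rintro x y ⟨i, hi, hu⟩; exact ⟨i, Ne.symm hi, fun j hj => hu j (Ne.symm hj)⟩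
  loopless := by constructor; rintro x ⟨i, hi, -⟩; exact hi rfl

/-- The even-weight vertices of the hypercube `Q_n`. -/
def evenV (n : ℕ) : Type := {x : Fin n → ZMod 2 // ∑ i, x i = 0}

/-- The odd-weight vertices of the hypercube `Q_n`. -/
def oddV (n : ℕ) : Type := {x : Fin n → ZMod 2 // ∑ i, x i ≠ 0}

instance (n : ℕ) : Fintype (evenV n) := by unfold evenV; infer_instance
instance (n : ℕ) : Fintype (oddV n) := by unfold oddV; infer_instance

open scoped Classical in
/-- The bipartite adjacency matrix of `Q_n` over `ZMod 2`: rows indexed by even-weight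
vertices, columns by odd-weight vertices, entry `1` at adjacent pairs, `0` otherwise. -/
noncomputable def bipAdjMatrix (n : ℕ) : Matrix (evenV n) (oddV n) (ZMod 2) :=
  fun x y => if (hypercube n).Adj x.val y.val then 1 else 0

namespace HCaux
open scoped Classical
open Matrix

variable {n : ℕ}

/-- the `i`-th basis vector -/
def dl (n : ℕ) (i : Fin n) : Fin n → ZMod 2 := Pi.single i 1

/-- sum over neighbors operator -/
def psi (n : ℕ) (f : (Fin n → ZMod 2) → ZMod 2) : (Fin n → ZMod 2) → ZMod 2 :=
  fun x => ∑ i, f (x + dl n i)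

lemma adj_iff (x y : Fin n → ZMod 2) :
    (hypercube n).Adj x y ↔ ∃ i, y = x + dl n i := by
  constructor
  · rintro ⟨i, hi, hu⟩
    refine ⟨i, funext fun j => ?_⟩
    rcases eq_or_ne j i with rfl | hj
    · show y j = x j + dl n j j
      unfold dl
      simp only [Pi.single_eq_same]
      revert hi; generalize x j = a; generalize y j = b
      revert a b; decide
    · have : ¬ x j ≠ y j := fun h => hj (hu j h)
      push_neg at this
      show y j = x j + dl n i j
      unfold dl
      simp [Pi.single_eq_of_ne hj, ← this]
  · rintro ⟨i, rfl⟩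
    refine ⟨i, ?_, fun j hj => ?_⟩
    · show x i ≠ x i + dl n i i
      unfold dl
      simp only [Pi.single_eq_same]
      generalize x i = a; revert a; decide
    · by_contra hne
      apply hj
      show x j = x j + dl n i j
      unfold dl
      simp [Pi.single_eq_of_ne hne]

lemma sum_add_dl (x : Fin n → ZMod 2) (i : Fin n) :
    ∑ j : Fin n, ((x + dl n i) : Fin n → ZMod 2) j = (∑ j : Fin n, x j) + 1 := by
  unfold dl
  simp [Finset.sum_add_distrib]

lemma add_dl_dl (x : Fin n → ZMod 2) (i : Fin n) :
    x + dl n i + dl n i = x := by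
  funext j
  show x j + dl n i j + dl n i j = x j
  generalize x j = a; generalize dl n i j = b
  revert a b; decide

lemma odd_of_even (x : Fin n → ZMod 2) (hx : ∑ j, x j = 0) (i : Fin n) :
    ∑ j : Fin n, ((x + dl n i) : Fin n → ZMod 2) j ≠ 0 := by
  rw [sum_add_dl, hx]; decide

lemma even_of_odd (x : Fin n → ZMod 2) (hx : ∑ j, x j ≠ 0) (i : Fin n) :
    ∑ j : Fin n, ((x + dl n i) : Fin n → ZMod 2) j = 0 := by
  rw [sum_add_dl]
  have : ∑ j, x j = 1 := by revert hx; generalize (∑ j, x j) = a; revert a; decide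
  rw [this]; decide

lemma dl_inj {i i' : Fin n} (h : dl n i = dl n i') : i = i' := by
  by_contra hne
  have := congrFun h i
  unfold dl at this
  rw [Pi.single_eq_same, Pi.single_eq_of_ne hne] at this
  exact one_ne_zero this

/-- Sum over odd neighbors, for an even vertex. -/
lemma sum_nbrs_odd (f : (Fin n → ZMod 2) → ZMod 2) (x : Fin n → ZMod 2)
    (hx : ∑ j, x j = 0) :
    ∑ y : oddV n, (if (hypercube n).Adj x y.val then (1:ZMod 2) else 0) * f y.val
      = psi n f x := by
  rw [show (∑ y : oddV n, (if (hypercube n).Adj x y.val then (1:ZMod 2) else 0) * f y.val)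
      = ∑ y : oddV n, (if (hypercube n).Adj x y.val then f y.val else 0) by
    apply Finset.sum_congr rfl; intro y _; split <;> simp]
  rw [← Finset.sum_filter]
  unfold psi
  refine (Finset.sum_bij (fun i _ => (⟨x + dl n i, odd_of_even x hx i⟩ : oddV n))
    ?_ ?_ ?_ ?_).symm
  · intro i _
    refine Finset.mem_filter.mpr ⟨Finset.mem_univ _, ?_⟩
    exact (adj_iff _ _).mpr ⟨i, rfl⟩
  · intro i _ i' _ h
    have : x + dl n i = x + dl n i' := congrArg Subtype.val h
    exact dl_inj (by simpa using this)
  · intro y hy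
    replace hy := (Finset.mem_filter.mp hy).2
    obtain ⟨i, hi⟩ := (adj_iff x y.val).mp hy
    exact ⟨i, Finset.mem_univ i, Subtype.ext hi.symm⟩
  · intro i _; rfl

/-- Sum over even neighbors, for an odd vertex. -/
lemma sum_nbrs_even (f : (Fin n → ZMod 2) → ZMod 2) (x : Fin n → ZMod 2)
    (hx : ∑ j, x j ≠ 0) :
    ∑ y : evenV n, (if (hypercube n).Adj x y.val then (1:ZMod 2) else 0) * f y.val
      = psi n f x := by
  rw [show (∑ y : evenV n, (if (hypercube n).Adj x y.val then (1:ZMod 2) else 0) * f y.val)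
      = ∑ y : evenV n, (if (hypercube n).Adj x y.val then f y.val else 0) by
    apply Finset.sum_congr rfl; intro y _; split <;> simp]
  rw [← Finset.sum_filter]
  unfold psi
  refine (Finset.sum_bij (fun i _ => (⟨x + dl n i, even_of_odd x hx i⟩ : evenV n))
    ?_ ?_ ?_ ?_).symm
  · intro i _
    refine Finset.mem_filter.mpr ⟨Finset.mem_univ _, ?_⟩
    exact (adj_iff _ _).mpr ⟨i, rfl⟩
  · intro i _ i' _ h
    have : x + dl n i = x + dl n i' := congrArg Subtype.val h
    exact dl_inj (by simpa using this)
  · intro y hy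
    replace hy := (Finset.mem_filter.mp hy).2
    obtain ⟨i, hi⟩ := (adj_iff x y.val).mp hy
    exact ⟨i, Finset.mem_univ i, Subtype.ext hi.symm⟩
  · intro i _; rfl

/-- extension by zero from odd vertices -/
noncomputable def extO (n : ℕ) (v : oddV n → ZMod 2) : (Fin n → ZMod 2) → ZMod 2 :=
  fun x => if h : ∑ i, x i ≠ 0 then v ⟨x, h⟩ else 0

/-- extension by zero from even vertices -/
noncomputable def extE (n : ℕ) (w : evenV n → ZMod 2) : (Fin n → ZMod 2) → ZMod 2 :=
  fun x => if h : ∑ i, x i = 0 then w ⟨x, h⟩ else 0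

lemma mulVec_eq (v : oddV n → ZMod 2) (e : evenV n) :
    (bipAdjMatrix n *ᵥ v) e = psi n (extO n v) e.val := by
  rw [← sum_nbrs_odd (extO n v) e.val e.prop]
  apply Finset.sum_congr rfl
  intro y _
  show (if (hypercube n).Adj e.val y.val then (1:ZMod 2) else 0) * v y = _
  congr 1
  unfold extO
  rw [dif_pos y.prop]
  exact congrArg v (Subtype.ext rfl)

lemma mulVecT_eq (w : evenV n → ZMod 2) (o : oddV n) :
    ((bipAdjMatrix n)ᵀ *ᵥ w) o = psi n (extE n w) o.val := by
  rw [← sum_nbrs_even (extE n w) o.val o.prop]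
  apply Finset.sum_congr rfl
  intro y _
  show (if (hypercube n).Adj y.val o.val then (1:ZMod 2) else 0) * w y = _
  simp only [(hypercube n).adj_comm]
  congr 1
  unfold extE
  rw [dif_pos y.prop]
  exact congrArg w (Subtype.ext rfl)

lemma psi_congr {f g : (Fin n → ZMod 2) → ZMod 2} (x : Fin n → ZMod 2)
    (h : ∀ i, f (x + dl n i) = g (x + dl n i)) : psi n f x = psi n g x :=
  Finset.sum_congr rfl (fun i _ => h i)

lemma psi_psi (heven : Even n) (f : (Fin n → ZMod 2) → ZMod 2) (x : Fin n → ZMod 2) :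
    psi n (psi n f) x = 0 := by
  unfold psi
  rw [← Finset.sum_product']
  rw [← Finset.diag_union_offDiag (Finset.univ : Finset (Fin n)), Finset.sum_union
    (Finset.disjoint_diag_offDiag _)]
  have h1 : ∑ p ∈ (Finset.univ : Finset (Fin n)).diag,
      f (x + dl n p.1 + dl n p.2) = 0 := by
    rw [Finset.sum_diag]
    have : ∀ i : Fin n, f (x + dl n i + dl n i) = f x := fun i => by rw [add_dl_dl]
    rw [Finset.sum_congr rfl (fun i _ => this i)]
    simp only [Finset.sum_const, Finset.card_univ, Fintype.card_fin, smul_eq_mul]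
    have h2 : ((n : ℕ) : ZMod 2) = 0 := by
      obtain ⟨k, hk⟩ := heven
      rw [hk]; push_cast; ring_nf
      rw [show ((2:ZMod 2) = 0) by decide]; ring
    rw [show ((n : ℕ) • f x : ZMod 2) = (n : ZMod 2) * f x by simp [nsmul_eq_mul]]
    rw [h2, zero_mul]
  have h2 : ∑ p ∈ (Finset.univ : Finset (Fin n)).offDiag,
      f (x + dl n p.1 + dl n p.2) = 0 := by
    apply Finset.sum_involution (fun p _ => (p.2, p.1))
    · intro p _
      have : x + dl n p.2 + dl n p.1 = x + dl n p.1 + dl n p.2 := by ring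
      rw [this]
      generalize f (x + dl n p.1 + dl n p.2) = a; revert a; decide
    · intro p hp _
      simp only [Finset.mem_offDiag] at hp
      intro h
      exact hp.2.2 (congrArg Prod.snd h)
    · intro p hp
      simp only [Finset.mem_offDiag] at hp ⊢
      exact ⟨hp.2.1, hp.1, fun h => hp.2.2 h.symm⟩
    · intro p _; rfl
  rw [h1, h2, add_zero]

lemma homotopy (i0 : Fin n) (f : (Fin n → ZMod 2) → ZMod 2) (x : Fin n → ZMod 2) :
    psi n (fun z => (1 + z i0) * f (z + dl n i0)) x
      + (1 + x i0) * psi n f (x + dl n i0) = f x := by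
  unfold psi
  rw [Finset.mul_sum, ← Finset.sum_add_distrib]
  have key : ∀ i : Fin n,
      (1 + (x + dl n i) i0) * f (x + dl n i + dl n i0)
        + (1 + x i0) * f (x + dl n i0 + dl n i)
      = (if i0 = i then (1:ZMod 2) else 0) * f (x + dl n i + dl n i0) := by
    intro i
    have hcomm : x + dl n i0 + dl n i = x + dl n i + dl n i0 := by ring
    rw [hcomm]
    have happ : ((x + dl n i) : Fin n → ZMod 2) i0 = x i0 + dl n i i0 := rfl
    rw [happ]
    have hsingle : dl n i i0 = if i0 = i then (1:ZMod 2) else 0 := Pi.single_apply i 1 i0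
    rw [hsingle]
    generalize f (x + dl n i + dl n i0) = c
    generalize x i0 = a
    generalize (if i0 = i then (1:ZMod 2) else 0) = b
    revert a b c; decide
  rw [Finset.sum_congr rfl (fun i _ => key i)]
  rw [show (∑ i : Fin n, (if i0 = i then (1:ZMod 2) else 0) * f (x + dl n i + dl n i0))
      = ∑ i : Fin n, (if i0 = i then f (x + dl n i + dl n i0) else 0) by
    apply Finset.sum_congr rfl; intro i _; split <;> simp]
  rw [Finset.sum_ite_eq]
  simp [add_dl_dl]

end HCaux

namespace HCaux
open scoped Classical
open Matrix

variable {n : ℕ}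

lemma BBt_eq_zero (heven : Even n) (w : evenV n → ZMod 2) :
    bipAdjMatrix n *ᵥ ((bipAdjMatrix n)ᵀ *ᵥ w) = 0 := by
  funext e
  show (bipAdjMatrix n *ᵥ ((bipAdjMatrix n)ᵀ *ᵥ w)) e = 0
  rw [mulVec_eq]
  have hcong : psi n (extO n ((bipAdjMatrix n)ᵀ *ᵥ w)) e.val
      = psi n (psi n (extE n w)) e.val := by
    apply psi_congr
    intro i
    unfold extO
    rw [dif_pos (odd_of_even e.val e.prop i)]
    exact mulVecT_eq w ⟨e.val + dl n i, odd_of_even e.val e.prop i⟩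
  rw [hcong]
  exact psi_psi heven (extE n w) e.val

lemma ker_sub_range (hn : 0 < n) (v : oddV n → ZMod 2)
    (hv : bipAdjMatrix n *ᵥ v = 0) :
    ∃ w, (bipAdjMatrix n)ᵀ *ᵥ w = v := by
  set i0 : Fin n := ⟨0, hn⟩
  set f := extO n v with hf
  have hpsi : ∀ x, psi n f x = 0 := by
    intro x
    by_cases hx : ∑ j, x j = 0
    · have h1 := mulVec_eq v ⟨x, hx⟩
      rw [hv] at h1
      exact h1.symm
    · unfold psi
      apply Finset.sum_eq_zero
      intro i _
      show extO n v (x + dl n i) = 0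
      unfold extO
      rw [dif_neg]
      push_neg
      exact even_of_odd x hx i
  set w : evenV n → ZMod 2 := fun e => (1 + e.val i0) * f (e.val + dl n i0) with hw
  refine ⟨w, funext fun o => ?_⟩
  rw [mulVecT_eq]
  have hcong : psi n (extE n w) o.val
      = psi n (fun z => (1 + z i0) * f (z + dl n i0)) o.val := by
    apply psi_congr
    intro i
    unfold extE
    rw [dif_pos (even_of_odd o.val o.prop i)]
  rw [hcong]
  have hh := homotopy i0 f o.val
  rw [hpsi (o.val + dl n i0), mul_zero, add_zero] at hh
  rw [hh]
  show extO n v o.val = v o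
  unfold extO
  rw [dif_pos o.prop]
  exact congrArg v (Subtype.ext rfl).symm

def parityEquiv (hn : 0 < n) : evenV n ≃ oddV n where
  toFun e := ⟨e.val + dl n ⟨0, hn⟩, odd_of_even e.val e.prop _⟩
  invFun o := ⟨o.val + dl n ⟨0, hn⟩, even_of_odd o.val o.prop _⟩
  left_inv e := Subtype.ext (add_dl_dl e.val _)
  right_inv o := Subtype.ext (add_dl_dl o.val _)

lemma card_oddV (hn : 0 < n) : Fintype.card (oddV n) = 2 ^ (n - 1) := by
  have h1 : Fintype.card (evenV n) = Fintype.card (oddV n) :=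
    Fintype.card_congr (parityEquiv hn)
  have h2 : Fintype.card (evenV n) + Fintype.card (oddV n) = 2 ^ n := by
    rw [← Fintype.card_sum]
    have e : (evenV n ⊕ oddV n) ≃ (Fin n → ZMod 2) :=
      Equiv.sumCompl (fun x : Fin n → ZMod 2 => ∑ i, x i = 0)
    rw [Fintype.card_congr e]
    simp [Fintype.card_fun]
  have h3 : 2 ^ n = 2 ^ (n - 1) * 2 := by
    rw [← pow_succ]; congr 1; omega
  omega

end HCaux


/-- For every even `n ≥ 2`, the bipartite adjacency matrix of `Q_n` over `ZMod 2`
has rank exactly `2^(n-2)`. -/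
theorem bipAdjMatrix_rank_even (n : ℕ) (hn : 2 ≤ n) (heven : Even n) :
    (bipAdjMatrix n).rank = 2 ^ (n - 2) := by
  classical
  have hn0 : 0 < n := by omega
  set B := bipAdjMatrix n with hB
  have hrange_le : LinearMap.range (Matrix.transpose B).mulVecLin ≤ LinearMap.ker B.mulVecLin := by
    rintro _ ⟨w, rfl⟩
    rw [LinearMap.mem_ker, Matrix.mulVecLin_apply, Matrix.mulVecLin_apply]
    exact HCaux.BBt_eq_zero heven w
  have hker_le : LinearMap.ker B.mulVecLin ≤ LinearMap.range (Matrix.transpose B).mulVecLin := by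
    intro v hv
    rw [LinearMap.mem_ker, Matrix.mulVecLin_apply] at hv
    obtain ⟨w, hw⟩ := HCaux.ker_sub_range hn0 v hv
    exact ⟨w, by rw [Matrix.mulVecLin_apply, hw]⟩
  have hkr : LinearMap.ker B.mulVecLin = LinearMap.range (Matrix.transpose B).mulVecLin :=
    le_antisymm hker_le hrange_le
  have hrn := LinearMap.finrank_range_add_finrank_ker B.mulVecLin
  rw [hkr] at hrn
  rw [show Module.finrank (ZMod 2) (LinearMap.range B.mulVecLin) = B.rank from rfl] at hrn
  rw [show Module.finrank (ZMod 2) (LinearMap.range (Matrix.transpose B).mulVecLin) = (Matrix.transpose B).rank from rfl] at hrn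
  rw [Matrix.rank_transpose] at hrn
  rw [Module.finrank_fintype_fun_eq_card] at hrn
  rw [HCaux.card_oddV hn0] at hrn
  have hpow : 2 ^ (n - 1) = 2 ^ (n - 2) * 2 := by
    rw [← pow_succ]; congr 1; omega
  omega
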